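/- arXiv:2512.18416 — 2 statements merged into one kernel-verified Lean document; each statement's English description precedes it below -/
import Mathlib

section
/- Let G be a finite simple graph with vertex enumeration x_1, …, x_n, let λ be a positive real, and let C > 0 be a real constant. Assume that for every i, the vertex x_i has at most 2λ neighbors among {x_j : j > i}, and that the total number of edges of G is at most λ·n. Define T recursively by T(x_i) := (2/(5λ)) · Σ_{j < i, x_j ~ x_i} T(x_j) + 10·C·deg(x_i)/λ, where the sum is over neighbors x_j of x_i with j < i. Then Σ_{i=1}^{n} T(x_i) ≤ (50C/λ) · Σ_{i=1}^{n} deg(x_i) ≤ 100·C·n. -/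
/-- Suppose each vertex `x_i` has at most `2λ` neighbors among `{x_j : j > i}` and the total
number of edges is at most `λ·n`. Define `T` recursively by
`T(x_i) = (2/(5λ)) · Σ_{j < i, x_j ~ x_i} T(x_j) + 10·C·deg(x_i)/λ`.
Then `Σ_i T(x_i) ≤ (50C/λ) · Σ_i deg(x_i) ≤ 100·C·n`. -/
theorem stmt4 {V : Type*} [Fintype V] [DecidableEq V] (G : SimpleGraph V)
    [DecidableRel G.Adj] (n : ℕ) (x : Fin n ≃ V) (lam C : ℝ) (hlam : 0 < lam) (hC : 0 < C)
    (hdeg : ∀ i : Fin n,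
      ((Finset.univ.filter (fun j : Fin n => i < j ∧ G.Adj (x i) (x j))).card : ℝ) ≤ 2 * lam)
    (hedges : (G.edgeFinset.card : ℝ) ≤ lam * n)
    (T : Fin n → ℝ)
    (hT : ∀ i : Fin n, T i =
      (2 / (5 * lam)) *
        (∑ j ∈ Finset.univ.filter (fun j : Fin n => j < i ∧ G.Adj (x j) (x i)), T j)
      + 10 * C * (G.degree (x i)) / lam) :
    (∑ i, T i) ≤ (50 * C / lam) * ∑ i, (G.degree (x i) : ℝ) ∧
    (50 * C / lam) * (∑ i, (G.degree (x i) : ℝ)) ≤ 100 * C * n := by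
  -- nonnegativity of T
  have hpos : ∀ i : Fin n, 0 ≤ T i := by
    have H : ∀ m : ℕ, ∀ i : Fin n, i.val ≤ m → 0 ≤ T i := by
      intro m
      induction m with
      | zero =>
        intro i hi
        rw [hT i]
        have hempty : (Finset.univ.filter (fun j : Fin n => j < i ∧ G.Adj (x j) (x i))) = ∅ := by
          ext j
          simp only [Finset.mem_filter, Finset.mem_univ, true_and, Finset.notMem_empty,
            iff_false, not_and]
          intro hj
          exact absurd (Nat.lt_of_lt_of_le hj hi) (Nat.not_lt_zero _)
        rw [hempty, Finset.sum_empty, mul_zero, zero_add]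
        positivity
      | succ m ih =>
        intro i hi
        rw [hT i]
        have h1 : 0 ≤ ∑ j ∈ Finset.univ.filter (fun j : Fin n => j < i ∧ G.Adj (x j) (x i)), T j := by
          apply Finset.sum_nonneg
          intro j hj
          have hj' : j < i := (Finset.mem_filter.1 hj).2.1
          exact ih j (by omega)
        have h2 : 0 ≤ (2 / (5 * lam)) := by positivity
        have h3 : (0:ℝ) ≤ 10 * C * (G.degree (x i)) / lam := by positivity
        nlinarith [mul_nonneg h2 h1]
    intro i
    exact H i.val i (le_refl _)
  set S := ∑ i, T i with hS
  set D := ∑ i, (G.degree (x i) : ℝ) with hD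
  -- key double-sum swap
  have key : ∑ i, ∑ j ∈ Finset.univ.filter (fun j : Fin n => j < i ∧ G.Adj (x j) (x i)), T j
      = ∑ j, ((Finset.univ.filter (fun i : Fin n => j < i ∧ G.Adj (x j) (x i))).card : ℝ) * T j := by
    simp_rw [Finset.sum_filter]
    rw [Finset.sum_comm]
    refine Finset.sum_congr rfl fun j _ => ?_
    rw [← Finset.sum_filter, Finset.sum_const, nsmul_eq_mul]
  have hbound : ∑ i, ∑ j ∈ Finset.univ.filter (fun j : Fin n => j < i ∧ G.Adj (x j) (x i)), T j
      ≤ 2 * lam * S := by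
    rw [key, hS, Finset.mul_sum]
    apply Finset.sum_le_sum
    intro j _
    have h1 := hdeg j
    have h2 : (Finset.univ.filter (fun i : Fin n => j < i ∧ G.Adj (x j) (x i)))
        = (Finset.univ.filter (fun i : Fin n => j < i ∧ G.Adj (x j) (x i))) := rfl
    exact mul_le_mul_of_nonneg_right (hdeg j) (hpos j)
  -- sum the recursion
  have hsum : S = (2 / (5 * lam)) *
      (∑ i, ∑ j ∈ Finset.univ.filter (fun j : Fin n => j < i ∧ G.Adj (x j) (x i)), T j)
      + (10 * C / lam) * D := by
    rw [hS]
    calc ∑ i, T i = ∑ i, ((2 / (5 * lam)) *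
          (∑ j ∈ Finset.univ.filter (fun j : Fin n => j < i ∧ G.Adj (x j) (x i)), T j)
          + 10 * C * (G.degree (x i)) / lam) := Finset.sum_congr rfl fun i _ => hT i
      _ = _ := by
          rw [Finset.sum_add_distrib]
          congr 1
          · rw [Finset.mul_sum]
          · rw [hD, Finset.mul_sum]
            exact Finset.sum_congr rfl fun i _ => by ring
  have hS1 : S ≤ (50 * C / lam) * D := by
    have hinner := hbound
    have h5 : (0:ℝ) < 5 * lam := by linarith
    have h2 : (0:ℝ) ≤ 2 / (5 * lam) := by positivity
    have hle : S ≤ (2 / (5 * lam)) * (2 * lam * S) + (10 * C / lam) * D :=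
      hsum.trans_le (add_le_add_left (mul_le_mul_of_nonneg_left hinner h2) _)
    have hfrac : (2 / (5 * lam)) * (2 * lam * S) = (4/5) * S := by
      field_simp; ring
    rw [hfrac] at hle
    have : (1/5) * S ≤ (10 * C / lam) * D := by linarith
    have h50 : (50 * C / lam) * D = 5 * ((10 * C / lam) * D) := by ring
    rw [h50]; linarith
  refine ⟨hS1, ?_⟩
  -- degree sum
  have hdegsum : D = 2 * (G.edgeFinset.card : ℝ) := by
    rw [hD]
    have := G.sum_degrees_eq_twice_card_edges
    have hcomp : ∑ i, (G.degree (x i) : ℝ) = ∑ v, (G.degree v : ℝ) :=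
      x.sum_comp (fun v => (G.degree v : ℝ))
    rw [hcomp]
    exact_mod_cast this
  rw [hdegsum]
  have hpos50 : (0:ℝ) < 50 * C / lam := by positivity
  have : (2:ℝ) * (G.edgeFinset.card : ℝ) ≤ 2 * (lam * n) := by linarith
  calc (50 * C / lam) * (2 * (G.edgeFinset.card : ℝ)) ≤ (50 * C / lam) * (2 * (lam * n)) :=
        mul_le_mul_of_nonneg_left this (le_of_lt hpos50)
    _ = 100 * C * n := by field_simp; ring
end

section
/- Let G be a finite simple graph with vertex enumeration x_1, …, x_n, let λ > 0 and C > 0 be reals, and define T recursively by T(x_i) := (2/(5λ)) · Σ_{j < i, x_j ~ x_i} T(x_j) + 10·C·deg(x_i)/λ. For k ≥ 1, let z_{k,i} denote the number of k-node directed paths starting at x_i, i.e., sequences of indices i = p_1 < p_2 < ⋯ < p_k with x_{p_l} adjacent to x_{p_{l+1}} for every 1 ≤ l < k (so z_{1,i} = 1, and z_{k,i} = 0 for k > n). Then Σ_{i=1}^{n} T(x_i) = Σ_{i=1}^{n} (10·C·deg(x_i)/λ) · ( Σ_{k=1}^{n} z_{k,i} · (2/(5λ))^{k−1} ). -/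
open Classical in
noncomputable def pathCount {V : Type*} [Fintype V] (G : SimpleGraph V) {n : ℕ}
    (x : Fin n ≃ V) (k : ℕ) (i : Fin n) : ℕ :=
  (Finset.univ.filter (fun p : Fin (k + 1) → Fin n =>
    StrictMono p ∧ p 0 = i ∧
      ∀ l : Fin k, G.Adj (x (p l.castSucc)) (x (p l.succ)))).card

-- pathCount 0 = 1
lemma pathCount_zero {V : Type*} [Fintype V] (G : SimpleGraph V) {n : ℕ}
    (x : Fin n ≃ V) (i : Fin n) : pathCount G x 0 i = 1 := by
  classical
  unfold pathCount
  rw [Finset.card_eq_one]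
  refine ⟨fun _ => i, ?_⟩
  ext p
  simp only [Finset.mem_filter, Finset.mem_univ, true_and, Finset.mem_singleton]
  constructor
  · rintro ⟨-, h0, -⟩
    funext l
    have hl : l = 0 := by
      have := l.isLt; ext; omega
    rw [hl, h0]
  · rintro rfl
    refine ⟨?_, rfl, fun l => l.elim0⟩
    intro a b hab
    rw [Fin.lt_def] at hab
    have := a.isLt; have := b.isLt; omega

-- vanishing
lemma pathCount_eq_zero {V : Type*} [Fintype V] (G : SimpleGraph V) {n : ℕ}
    (x : Fin n ≃ V) (k : ℕ) (i : Fin n) (h : n ≤ k + i) : pathCount G x k i = 0 := by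
  classical
  unfold pathCount
  rw [Finset.card_eq_zero]
  rw [Finset.filter_eq_empty_iff]
  rintro p - ⟨hsm, h0, -⟩
  have key : ∀ m (hm : m < k + 1), (p 0 : ℕ) + m ≤ (p ⟨m, hm⟩ : ℕ) := by
    intro m
    induction m with
    | zero => intro hm; simp
    | succ m ih =>
      intro hm
      have hm' : m < k + 1 := Nat.lt_of_succ_lt hm
      have h1 := ih hm'
      have h2 : p ⟨m, hm'⟩ < p ⟨m + 1, hm⟩ := hsm (by simp [Fin.lt_def])
      omega
  have := key k (Nat.lt_succ_self k)
  have hlt : (p ⟨k, Nat.lt_succ_self k⟩ : ℕ) < n := (p _).2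
  rw [h0] at this
  omega

-- recursion
lemma pathCount_succ {V : Type*} [Fintype V] (G : SimpleGraph V)
    [DecidableRel G.Adj] {n : ℕ} (x : Fin n ≃ V) (k : ℕ) (i : Fin n) :
    pathCount G x (k + 1) i =
      ∑ j ∈ Finset.univ.filter (fun j : Fin n => i < j ∧ G.Adj (x i) (x j)),
        pathCount G x k j := by
  classical
  unfold pathCount
  rw [← Finset.card_sigma]
  apply Finset.card_bij (fun p _ => (⟨p 1, fun l => p l.succ⟩ :
    Σ _ : Fin n, Fin (k + 1) → Fin n))
  · rintro p hp
    simp only [Finset.mem_filter, Finset.mem_univ, true_and] at hp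
    obtain ⟨hsm, h0, hadj⟩ := hp
    simp only [Finset.mem_sigma, Finset.mem_filter, Finset.mem_univ, true_and]
    refine ⟨⟨?_, ?_⟩, ?_, ?_, ?_⟩
    · rw [← h0]; exact hsm (by simp [Fin.lt_def])
    · have := hadj 0
      simpa [h0] using this
    · exact hsm.comp (Fin.strictMono_succ)
    · rfl
    · intro l
      have := hadj l.succ
      simpa [← Fin.succ_castSucc] using this
  · intro p hp q hq h
    simp only [Sigma.mk.inj_iff, heq_eq_eq] at h
    simp only [Finset.mem_filter, Finset.mem_univ, true_and] at hp hq
    funext l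
    rcases Fin.eq_zero_or_eq_succ l with rfl | ⟨m, rfl⟩
    · rw [hp.2.1, hq.2.1]
    · exact congrFun h.2 m
  · rintro ⟨j, q⟩ hjq
    simp only [Finset.mem_sigma, Finset.mem_filter, Finset.mem_univ, true_and] at hjq
    obtain ⟨⟨hij, hadj0⟩, hsm, h0, hadj⟩ := hjq
    refine ⟨Fin.cons i q, ?_, ?_⟩
    · simp only [Finset.mem_filter, Finset.mem_univ, true_and]
      refine ⟨?_, rfl, ?_⟩
      · rw [Fin.strictMono_iff_lt_succ]
        intro l
        rcases Fin.eq_zero_or_eq_succ l with rfl | ⟨m, rfl⟩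
        · simpa [h0] using hij
        · rw [← Fin.succ_castSucc, Fin.cons_succ, Fin.cons_succ]
          exact hsm (Fin.castSucc_lt_succ (i := m))
      · intro l
        rcases Fin.eq_zero_or_eq_succ l with rfl | ⟨m, rfl⟩
        · simpa [h0] using hadj0
        · rw [← Fin.succ_castSucc, Fin.cons_succ, Fin.cons_succ]
          exact hadj m
    · simp only [Sigma.mk.inj_iff, heq_eq_eq]
      refine ⟨by simpa using h0, funext fun l => by simp⟩

/-- With `T` defined recursively by
`T(x_i) = (2/(5λ)) · Σ_{j < i, x_j ~ x_i} T(x_j) + 10·C·deg(x_i)/λ`, one has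
`Σ_{i=1}^n T(x_i) = Σ_{i=1}^n (10·C·deg(x_i)/λ) · (Σ_{k=1}^n z_{k,i} · (2/(5λ))^{k-1})`. -/
theorem stmt6 {V : Type*} [Fintype V] [DecidableEq V] (G : SimpleGraph V)
    [DecidableRel G.Adj] (n : ℕ) (x : Fin n ≃ V) (lam C : ℝ) (hlam : 0 < lam) (hC : 0 < C)
    (T : Fin n → ℝ)
    (hT : ∀ i : Fin n, T i =
      (2 / (5 * lam)) *
        (∑ j ∈ Finset.univ.filter (fun j : Fin n => j < i ∧ G.Adj (x j) (x i)), T j)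
      + 10 * C * (G.degree (x i)) / lam) :
    (∑ i, T i) =
      ∑ i, (10 * C * (G.degree (x i)) / lam) *
        ∑ k ∈ Finset.range n, (pathCount G x k i : ℝ) * (2 / (5 * lam)) ^ k := by
  classical
  set q : ℝ := 2 / (5 * lam) with hq
  set W : Fin n → ℝ := fun i => ∑ k ∈ Finset.range n, (pathCount G x k i : ℝ) * q ^ k
    with hW
  -- recursion for W
  have hWrec : ∀ i : Fin n, W i = 1 + q *
      ∑ j ∈ Finset.univ.filter (fun j : Fin n => i < j ∧ G.Adj (x i) (x j)), W j := by
    intro i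
    obtain ⟨m, rfl⟩ : ∃ m, n = m + 1 := ⟨n - 1, by have := i.isLt; omega⟩
    have hWj : ∀ j ∈ Finset.univ.filter (fun j : Fin (m+1) => i < j ∧ G.Adj (x i) (x j)),
        W j = ∑ k ∈ Finset.range m, (pathCount G x k j : ℝ) * q ^ k := by
      intro j hj
      simp only [Finset.mem_filter] at hj
      have hj1 : 1 ≤ (j : ℕ) := by
        have := hj.2.1
        rw [Fin.lt_def] at this
        omega
      show (∑ k ∈ Finset.range (m + 1), (pathCount G x k j : ℝ) * q ^ k) = _
      rw [Finset.sum_range_succ, pathCount_eq_zero G x m j (by omega)]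
      simp
    rw [hW]
    simp only
    rw [Finset.sum_range_succ']
    have h0 : (pathCount G x 0 i : ℝ) * q ^ 0 = 1 := by
      rw [pathCount_zero]; simp
    rw [h0]
    rw [add_comm]
    congr 1
    calc ∑ k ∈ Finset.range m, (pathCount G x (k+1) i : ℝ) * q ^ (k+1)
        = ∑ k ∈ Finset.range m, ∑ j ∈ Finset.univ.filter
            (fun j : Fin (m+1) => i < j ∧ G.Adj (x i) (x j)),
            q * ((pathCount G x k j : ℝ) * q ^ k) := by
          apply Finset.sum_congr rfl
          intro k _
          rw [pathCount_succ]
          push_cast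
          rw [Finset.sum_mul]
          apply Finset.sum_congr rfl
          intro j _
          ring
      _ = q * ∑ j ∈ Finset.univ.filter
            (fun j : Fin (m+1) => i < j ∧ G.Adj (x i) (x j)),
            ∑ k ∈ Finset.range m, (pathCount G x k j : ℝ) * q ^ k := by
          rw [Finset.sum_comm, Finset.mul_sum]
          apply Finset.sum_congr rfl
          intro j _
          rw [Finset.mul_sum]
      _ = q * ∑ j ∈ Finset.univ.filter
            (fun j : Fin (m+1) => i < j ∧ G.Adj (x i) (x j)), W j := by
          congr 1
          exact (Finset.sum_congr rfl hWj).symm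
  -- main computation
  have key : ∑ i, (T i - q * ∑ j ∈ Finset.univ.filter
      (fun j : Fin n => j < i ∧ G.Adj (x j) (x i)), T j) * W i = ∑ i, T i := by
    have swap : ∑ i, (∑ j ∈ Finset.univ.filter
        (fun j : Fin n => j < i ∧ G.Adj (x j) (x i)), T j) * W i
        = ∑ j, T j * ∑ i ∈ Finset.univ.filter
        (fun i : Fin n => j < i ∧ G.Adj (x j) (x i)), W i := by
      simp only [Finset.sum_mul, Finset.mul_sum]
      rw [Finset.sum_comm' (s := Finset.univ) (t := fun i => Finset.univ.filter
        (fun j : Fin n => j < i ∧ G.Adj (x j) (x i))) (t' := Finset.univ)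
        (s' := fun j => Finset.univ.filter (fun i : Fin n => j < i ∧ G.Adj (x j) (x i)))]
      intro i j
      simp [and_comm]
    calc ∑ i, (T i - q * ∑ j ∈ Finset.univ.filter
          (fun j : Fin n => j < i ∧ G.Adj (x j) (x i)), T j) * W i
        = ∑ i, T i * W i - q * ∑ i, (∑ j ∈ Finset.univ.filter
          (fun j : Fin n => j < i ∧ G.Adj (x j) (x i)), T j) * W i := by
          rw [Finset.mul_sum, ← Finset.sum_sub_distrib]
          apply Finset.sum_congr rfl; intro i _; ring
      _ = ∑ i, T i * (W i - q * ∑ j ∈ Finset.univ.filter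
          (fun j : Fin n => i < j ∧ G.Adj (x i) (x j)), W j) := by
          rw [swap, Finset.mul_sum, ← Finset.sum_sub_distrib]
          apply Finset.sum_congr rfl; intro i _; ring
      _ = ∑ i, T i := by
          apply Finset.sum_congr rfl
          intro i _
          have := hWrec i
          have : W i - q * ∑ j ∈ Finset.univ.filter
              (fun j : Fin n => i < j ∧ G.Adj (x i) (x j)), W j = 1 := by
            rw [hWrec i]; ring
          rw [this, mul_one]
  have hb : ∀ i : Fin n, T i - q * ∑ j ∈ Finset.univ.filter
      (fun j : Fin n => j < i ∧ G.Adj (x j) (x i)), T j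
      = 10 * C * (G.degree (x i)) / lam := by
    intro i
    rw [hT i]; ring
  rw [← key]
  apply Finset.sum_congr rfl
  intro i _
  rw [hb i]
end
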